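/- The routing number of the star K_{1,n-1} is ⌊3(n−1)/2⌋. -/

import Mathlib

/-- A single routing step on `G`: an involutive permutation that swaps the pebbles
on the endpoints of each edge of a matching of `G`. -/
def IsMatchingStep {V : Type*} (G : SimpleGraph V) (σ : Equiv.Perm V) : Prop :=
  (∀ v, σ (σ v) = v) ∧ ∀ v, σ v ≠ v → G.Adj v (σ v)

/-- The permutation `π` (giving the destination of each pebble) can be routed on `G`
in `k` matching steps. -/
def RoutableIn {V : Type*} (G : SimpleGraph V) (π : Equiv.Perm V) (k : ℕ) : Prop :=
  ∃ L : List (Equiv.Perm V), L.length = k ∧ (∀ σ ∈ L, IsMatchingStep G σ) ∧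
    L.reverse.prod = π

/-- The routing time `rt(G, π)`: the minimum number of matching steps needed to
route `π` on `G`. -/
noncomputable def routingTime {V : Type*} (G : SimpleGraph V) (π : Equiv.Perm V) : ℕ :=
  sInf {k | RoutableIn G π k}

/-- The routing number `rt(G)`: the maximum of `rt(G, π)` over all permutations `π`. -/
noncomputable def routingNumber {V : Type*} (G : SimpleGraph V) : ℕ :=
  sSup (Set.range fun π : Equiv.Perm V => routingTime G π)

/-- The star graph with center `0` and `n` leaves. -/
def starGraph (n : ℕ) : SimpleGraph (Fin (n + 1)) :=
  SimpleGraph.fromRel (fun a _ => a = 0)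

namespace StarRouting

variable {n : ℕ}

lemma star_adj {a b : Fin (n+1)} : (starGraph n).Adj a b ↔ a ≠ b ∧ (a = 0 ∨ b = 0) := by
  simp [starGraph, SimpleGraph.fromRel_adj]

lemma one_step : IsMatchingStep (starGraph n) (1 : Equiv.Perm (Fin (n+1))) :=
  ⟨fun _ => rfl, fun _ hv => by simp at hv⟩

lemma swap_step (i : Fin (n+1)) (hi : i ≠ 0) :
    IsMatchingStep (starGraph n) (Equiv.swap 0 i) := by
  constructor
  · intro v; exact Equiv.swap_apply_self _ _ _
  · intro v hv
    rcases eq_or_ne v 0 with rfl | h0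
    · rw [Equiv.swap_apply_left]; exact star_adj.2 ⟨Ne.symm hi, Or.inl rfl⟩
    · rcases eq_or_ne v i with rfl | h1
      · rw [Equiv.swap_apply_right]; exact star_adj.2 ⟨hi, Or.inr rfl⟩
      · rw [Equiv.swap_apply_of_ne_of_ne h0 h1] at hv; exact absurd rfl hv

lemma step_classify {σ : Equiv.Perm (Fin (n+1))} (h : IsMatchingStep (starGraph n) σ) :
    σ = 1 ∨ ∃ i, i ≠ 0 ∧ σ = Equiv.swap 0 i := by
  by_cases h1 : σ = 1
  · exact Or.inl h1
  right
  have h0 : σ 0 ≠ 0 := by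
    intro h00
    apply h1
    refine Equiv.Perm.ext fun v => ?_
    simp only [Equiv.Perm.one_apply]
    by_contra hv
    rcases (star_adj.1 (h.2 v hv)).2 with hv0 | hv0
    · exact hv (hv0 ▸ h00)
    · exact hv (σ.injective (hv0.trans h00.symm) ▸ hv0)
  refine ⟨σ 0, h0, Equiv.Perm.ext fun w => ?_⟩
  rcases eq_or_ne w 0 with rfl | hw0
  · rw [Equiv.swap_apply_left]
  rcases eq_or_ne w (σ 0) with rfl | hwi
  · rw [Equiv.swap_apply_right, h.1]
  rw [Equiv.swap_apply_of_ne_of_ne hw0 hwi]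
  by_contra hv
  rcases (star_adj.1 (h.2 w hv)).2 with hv0 | hv0
  · exact hw0 hv0
  · exact hwi (by rw [← hv0, h.1])



def Aset (π : Equiv.Perm (Fin (n+1))) : Finset (Fin (n+1)) :=
  Finset.univ.filter (fun v => v ≠ 0 ∧ π v ≠ v)

def Bset (π : Equiv.Perm (Fin (n+1))) : Finset (Fin (n+1)) :=
  Finset.univ.filter (fun v => v ≠ 0 ∧ π v ≠ 0 ∧ π (π v) = v ∧ (v : ℕ) < (π v : ℕ))

def psi (π : Equiv.Perm (Fin (n+1))) : ℕ := (Aset π).card + (Bset π).card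

lemma mem_Aset {π : Equiv.Perm (Fin (n+1))} {v : Fin (n+1)} :
    v ∈ Aset π ↔ v ≠ 0 ∧ π v ≠ v := by simp [Aset]

lemma mem_Bset {π : Equiv.Perm (Fin (n+1))} {v : Fin (n+1)} :
    v ∈ Bset π ↔ v ≠ 0 ∧ π v ≠ 0 ∧ π (π v) = v ∧ (v : ℕ) < (π v : ℕ) := by simp [Bset]

lemma psi_le {i : Fin (n+1)} (hi : i ≠ 0) (π : Equiv.Perm (Fin (n+1))) :
    psi π ≤ psi (Equiv.swap 0 i * π) + 1 := by
  set ρ := Equiv.swap 0 i * π with hρdef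
  have hρ : ∀ w, ρ w = Equiv.swap 0 i (π w) := fun w => rfl
  -- generic: if v ∉ {0, i} and π v ∉ {0, i} then v ∈ Aset π → v ∈ Aset ρ, similarly B
  have hswap : ∀ w : Fin (n+1), w ≠ 0 → w ≠ i → Equiv.swap 0 i w = w :=
    fun w h1 h2 => Equiv.swap_apply_of_ne_of_ne h1 h2
  by_cases h0 : π i = 0
  · -- A ⊆ insert i Aρ, B ⊆ Bρ
    have hA : Aset π ⊆ insert i (Aset ρ) := by
      intro v hv
      rw [mem_Aset] at hv
      rcases eq_or_ne v i with rfl | hvi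
      · exact Finset.mem_insert_self _ _
      refine Finset.mem_insert_of_mem (mem_Aset.2 ⟨hv.1, fun hc => ?_⟩)
      rw [hρ] at hc
      have h2 := congrArg (Equiv.swap 0 i) hc
      rw [Equiv.swap_apply_self, hswap v hv.1 hvi] at h2
      exact hv.2 h2
    have hB : Bset π ⊆ Bset ρ := by
      intro v hv
      rw [mem_Bset] at hv
      obtain ⟨hv0, hπv0, hvv, hlt⟩ := hv
      have hvi : v ≠ i := fun hc => hπv0 (by rw [hc, h0])
      have hπvi : π v ≠ i := fun hc => hv0 (by rw [← hvv, hc, h0])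
      rw [mem_Bset, hρ, hρ, hswap _ hπv0 hπvi]
      exact ⟨hv0, hπv0, by rw [hvv, hswap v hv0 hvi], hlt⟩
    calc psi π = (Aset π).card + (Bset π).card := rfl
      _ ≤ (insert i (Aset ρ)).card + (Bset ρ).card :=
          Nat.add_le_add (Finset.card_le_card hA) (Finset.card_le_card hB)
      _ ≤ ((Aset ρ).card + 1) + (Bset ρ).card :=
          Nat.add_le_add_right (Finset.card_insert_le _ _) _
      _ = psi ρ + 1 := by simp [psi]; ring
  · have hA : Aset π ⊆ Aset ρ := by
      intro v hv
      rw [mem_Aset] at hv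
      rw [mem_Aset]
      refine ⟨hv.1, fun hc => ?_⟩
      rw [hρ] at hc
      have h2 := congrArg (Equiv.swap 0 i) hc
      rw [Equiv.swap_apply_self] at h2
      rcases eq_or_ne v i with hvi | hvi
      · rw [hvi, Equiv.swap_apply_right] at h2
        exact h0 (hvi ▸ h2)
      · rw [hswap v hv.1 hvi] at h2
        exact hv.2 h2
    have hBgen : ∀ v, v ∈ Bset π → v ≠ i → π v ≠ i → v ∈ Bset ρ := by
      intro v hv hvi hπvi
      rw [mem_Bset] at hv
      obtain ⟨hv0, hπv0, hvv, hlt⟩ := hv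
      rw [mem_Bset, hρ, hρ, hswap _ hπv0 hπvi]
      exact ⟨hv0, hπv0, by rw [hvv, hswap v hv0 hvi], hlt⟩
    by_cases hlt : (i : ℕ) < (π i : ℕ)
    · have hB : Bset π ⊆ insert i (Bset ρ) := by
        intro v hv
        rcases eq_or_ne v i with rfl | hvi
        · exact Finset.mem_insert_self _ _
        refine Finset.mem_insert_of_mem (hBgen v hv hvi fun hc => ?_)
        rw [mem_Bset] at hv
        have h1 : π i = v := by rw [← hc, hv.2.2.1]
        have h2 : (v : ℕ) < (i : ℕ) := hc ▸ hv.2.2.2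
        rw [h1] at hlt
        omega
      calc psi π = (Aset π).card + (Bset π).card := rfl
        _ ≤ (Aset ρ).card + (insert i (Bset ρ)).card :=
            Nat.add_le_add (Finset.card_le_card hA) (Finset.card_le_card hB)
        _ ≤ (Aset ρ).card + ((Bset ρ).card + 1) :=
            Nat.add_le_add_left (Finset.card_insert_le _ _) _
        _ = psi ρ + 1 := by simp [psi, Nat.add_assoc]
    · have hB : Bset π ⊆ insert (π i) (Bset ρ) := by
        intro v hv
        rcases eq_or_ne v (π i) with rfl | hvpi
        · exact Finset.mem_insert_self _ _
        have hvi : v ≠ i := by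
          rintro rfl
          rw [mem_Bset] at hv
          exact hlt hv.2.2.2
        refine Finset.mem_insert_of_mem (hBgen v hv hvi fun hc => ?_)
        rw [mem_Bset] at hv
        exact hvpi (by rw [← hv.2.2.1, hc])
      calc psi π = (Aset π).card + (Bset π).card := rfl
        _ ≤ (Aset ρ).card + (insert (π i) (Bset ρ)).card :=
            Nat.add_le_add (Finset.card_le_card hA) (Finset.card_le_card hB)
        _ ≤ (Aset ρ).card + ((Bset ρ).card + 1) :=
            Nat.add_le_add_left (Finset.card_insert_le _ _) _
        _ = psi ρ + 1 := by simp [psi, Nat.add_assoc]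

lemma routable_one (k : ℕ) : RoutableIn (starGraph n) 1 k := by
  refine ⟨List.replicate k 1, List.length_replicate, ?_, ?_⟩
  · intro σ hσ
    rw [List.eq_of_mem_replicate hσ]
    exact one_step
  · rw [List.reverse_replicate, List.prod_replicate, one_pow]

lemma routable_cons {π : Equiv.Perm (Fin (n+1))} {k : ℕ} {σ : Equiv.Perm (Fin (n+1))}
    (h : RoutableIn (starGraph n) π k) (hσ : IsMatchingStep (starGraph n) σ) :
    RoutableIn (starGraph n) (σ * π) (k + 1) := by
  obtain ⟨L, hlen, hsteps, hprod⟩ := h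
  refine ⟨L ++ [σ], by simp [hlen], ?_, ?_⟩
  · intro τ hτ
    rcases List.mem_append.1 hτ with h | h
    · exact hsteps τ h
    · rw [List.mem_singleton.1 h]; exact hσ
  · rw [List.reverse_append, List.reverse_singleton, List.singleton_append,
      List.prod_cons, hprod]

lemma aset_empty_eq_one {π : Equiv.Perm (Fin (n+1))} (h : Aset π = ∅) : π = 1 := by
  have hfix : ∀ v : Fin (n+1), v ≠ 0 → π v = v := by
    intro v hv
    by_contra hc
    exact (Finset.eq_empty_iff_forall_notMem.1 h v) (mem_Aset.2 ⟨hv, hc⟩)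
  refine Equiv.Perm.ext fun v => ?_
  rw [Equiv.Perm.one_apply]
  rcases eq_or_ne v 0 with rfl | hv
  · by_contra hc
    have h1 : π (π 0) = π 0 := hfix _ hc
    have := π.injective h1
    exact hc (this ▸ h1)
  · exact hfix v hv

lemma Aset_swap_erase {π : Equiv.Perm (Fin (n+1))} {j : Fin (n+1)}
    (hj0 : j ≠ 0) (hj : π j = 0) :
    Aset (Equiv.swap 0 j * π) = (Aset π).erase j := by
  ext v
  rw [mem_Aset, Finset.mem_erase, mem_Aset]
  have happ : (Equiv.swap 0 j * π) v = Equiv.swap 0 j (π v) := rfl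
  constructor
  · rintro ⟨hv0, hvm⟩
    have hvj : v ≠ j := by
      rintro rfl
      rw [happ, hj, Equiv.swap_apply_left] at hvm
      exact hvm rfl
    refine ⟨hvj, hv0, fun hc => ?_⟩
    rw [happ, hc, Equiv.swap_apply_of_ne_of_ne hv0 hvj] at hvm
    exact hvm rfl
  · rintro ⟨hvj, hv0, hvm⟩
    refine ⟨hv0, fun hc => ?_⟩
    rw [happ] at hc
    have hπv0 : π v ≠ 0 := fun h => hvj (π.injective (h.trans hj.symm))
    rcases eq_or_ne (π v) j with hpj | hpj
    · rw [hpj, Equiv.swap_apply_right] at hc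
      exact hv0 hc.symm
    · rw [Equiv.swap_apply_of_ne_of_ne hπv0 hpj] at hc
      exact hvm hc

lemma Aset_two_erase {π : Equiv.Perm (Fin (n+1))} {j : Fin (n+1)}
    (hj0 : j ≠ 0) (h00 : π 0 = 0) (hjm : π j ≠ j) :
    Aset (Equiv.swap 0 j * (Equiv.swap 0 (π j) * π)) = (Aset π).erase j := by
  set k₀ := π j with hk₀
  have hk0 : k₀ ≠ 0 := fun h => hj0 (π.injective (h.trans h00.symm))
  have hk0j : k₀ ≠ j := hjm
  ext v
  rw [mem_Aset, Finset.mem_erase, mem_Aset]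
  have happ : ∀ w, (Equiv.swap 0 j * (Equiv.swap 0 k₀ * π)) w
      = Equiv.swap 0 j (Equiv.swap 0 k₀ (π w)) := fun w => rfl
  have hjfix : (Equiv.swap 0 j * (Equiv.swap 0 k₀ * π)) j = j := by
    rw [happ, ← hk₀, Equiv.swap_apply_right, Equiv.swap_apply_left]
  constructor
  · rintro ⟨hv0, hvm⟩
    have hvj : v ≠ j := by rintro rfl; exact hvm hjfix
    have hπv0 : π v ≠ 0 := fun h => hv0 (π.injective (h.trans h00.symm))
    have hπvk : π v ≠ k₀ := fun h => hvj (π.injective h)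
    refine ⟨hvj, hv0, fun hc => ?_⟩
    rw [happ, Equiv.swap_apply_of_ne_of_ne hπv0 hπvk, hc,
      Equiv.swap_apply_of_ne_of_ne hv0 hvj] at hvm
    exact hvm rfl
  · rintro ⟨hvj, hv0, hvm⟩
    refine ⟨hv0, fun hc => ?_⟩
    have hπv0 : π v ≠ 0 := fun h => hv0 (π.injective (h.trans h00.symm))
    have hπvk : π v ≠ k₀ := fun h => hvj (π.injective h)
    rw [happ, Equiv.swap_apply_of_ne_of_ne hπv0 hπvk] at hc
    rcases eq_or_ne (π v) j with hpj | hpj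
    · rw [hpj, Equiv.swap_apply_right] at hc
      exact hv0 hc.symm
    · rw [Equiv.swap_apply_of_ne_of_ne hπv0 hpj] at hc
      exact hvm hc

def fval (π : Equiv.Perm (Fin (n+1))) : ℕ :=
  if π 0 = 0 then 3 * (Aset π).card / 2 else 3 * ((Aset π).card - 1) / 2 + 1

lemma route : ∀ (M : ℕ) (π : Equiv.Perm (Fin (n+1))), (Aset π).card ≤ M →
    ∀ k, fval π ≤ k → RoutableIn (starGraph n) π k := by
  intro M
  induction M with
  | zero =>
    intro π hc k _
    have h := aset_empty_eq_one (Finset.card_eq_zero.1 (Nat.le_zero.1 hc))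
    exact h ▸ routable_one k
  | succ M ih =>
    intro π hc k hk
    by_cases hA : Aset π = ∅
    · exact (aset_empty_eq_one hA) ▸ routable_one k
    by_cases h0 : π 0 = 0
    · -- case C: center fixed, pick a moved leaf j
      obtain ⟨j, hjA⟩ := Finset.nonempty_iff_ne_empty.2 hA
      obtain ⟨hj0, hjm⟩ := mem_Aset.1 hjA
      set k₀ := π j with hk₀
      have hk0 : k₀ ≠ 0 := fun h => hj0 (π.injective (h.trans h0.symm))
      have hk0j : k₀ ≠ j := hjm
      have hk0A : k₀ ∈ Aset π :=
        mem_Aset.2 ⟨hk0, fun h => hk0j (π.injective (h.trans hk₀))⟩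
      have hm2 : 2 ≤ (Aset π).card := by
        have hsub : ({j, k₀} : Finset (Fin (n+1))) ⊆ Aset π := by
          intro x hx
          rcases Finset.mem_insert.1 hx with rfl | hx
          · exact hjA
          · rw [Finset.mem_singleton.1 hx]; exact hk0A
        calc 2 = ({j, k₀} : Finset (Fin (n+1))).card :=
              (Finset.card_pair (Ne.symm hk0j)).symm
          _ ≤ (Aset π).card := Finset.card_le_card hsub
      set π' := Equiv.swap 0 j * (Equiv.swap 0 k₀ * π) with hπ'def
      have hAe : Aset π' = (Aset π).erase j := Aset_two_erase hj0 h0 hjm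
      have hcard' : (Aset π').card = (Aset π).card - 1 := by
        rw [hAe, Finset.card_erase_of_mem hjA]
      have hπ'0 : π' 0 = k₀ := by
        show (Equiv.swap 0 j) ((Equiv.swap 0 k₀) (π 0)) = k₀
        rw [h0, Equiv.swap_apply_left, Equiv.swap_apply_of_ne_of_ne hk0 hk0j]
      have hfv : 3 * (Aset π).card / 2 ≤ k := by
        have := hk; rwa [fval, if_pos h0] at this
      have hfv' : fval π' ≤ k - 2 := by
        rw [fval, if_neg (hπ'0 ▸ hk0), hcard']
        omega
      have hroute' := ih π' (by omega) (k - 2) hfv'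
      have r1 := routable_cons hroute' (swap_step j hj0)
      have r2 := routable_cons r1 (swap_step k₀ hk0)
      have heq : Equiv.swap 0 k₀ * (Equiv.swap 0 j * π') = π := by
        rw [hπ'def, Equiv.swap_mul_self_mul, Equiv.swap_mul_self_mul]
      have hkk : k - 2 + 1 + 1 = k := by omega
      rw [heq, hkk] at r2
      exact r2
    · -- case B: center moved
      set j := π.symm 0 with hjdef
      have hj : π j = 0 := π.apply_symm_apply 0
      have hj0 : j ≠ 0 := fun h => h0 (h ▸ hj)
      have hjA : j ∈ Aset π := mem_Aset.2 ⟨hj0, by rw [hj]; exact Ne.symm hj0⟩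
      have hm1 : 1 ≤ (Aset π).card := Finset.card_pos.2 ⟨j, hjA⟩
      set π' := Equiv.swap 0 j * π with hπ'def
      have hAe : Aset π' = (Aset π).erase j := Aset_swap_erase hj0 hj
      have hcard' : (Aset π').card = (Aset π).card - 1 := by
        rw [hAe, Finset.card_erase_of_mem hjA]
      have hfv : 3 * ((Aset π).card - 1) / 2 + 1 ≤ k := by
        have := hk; rwa [fval, if_neg h0] at this
      have hfv' : fval π' ≤ k - 1 := by
        by_cases hz : π' 0 = 0
        · rw [fval, if_pos hz, hcard']; omega
        · have hx0 : π 0 ≠ 0 := h0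
          have hxj : π 0 ≠ j := by
            intro hc
            apply hz
            show (Equiv.swap 0 j) (π 0) = 0
            rw [hc, Equiv.swap_apply_right]
          have hxA : π 0 ∈ Aset π := by
            refine mem_Aset.2 ⟨hx0, fun hc => ?_⟩
            exact hx0 (π.injective hc)
          have hm2 : 2 ≤ (Aset π).card := by
            have hsub : ({j, π 0} : Finset (Fin (n+1))) ⊆ Aset π := by
              intro x hx
              rcases Finset.mem_insert.1 hx with rfl | hx
              · exact hjA
              · rw [Finset.mem_singleton.1 hx]; exact hxA
            calc 2 = ({j, π 0} : Finset (Fin (n+1))).card :=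
                  (Finset.card_pair (Ne.symm hxj)).symm
              _ ≤ (Aset π).card := Finset.card_le_card hsub
          rw [fval, if_neg hz, hcard']
          omega
      have hroute' := ih π' (by omega) (k - 1) hfv'
      have r1 := routable_cons hroute' (swap_step j hj0)
      have heq : Equiv.swap 0 j * π' = π := by
        rw [hπ'def, Equiv.swap_mul_self_mul]
      have hkk : k - 1 + 1 = k := by omega
      rw [heq, hkk] at r1
      exact r1

def gfun (n : ℕ) (v : Fin (n+1)) : Fin (n+1) :=
  if v.val = 0 then (if n % 2 = 1 then ⟨n, n.lt_succ_self⟩ else v)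
  else if v.val % 2 = 1 then
    (if h2 : v.val = n then 0 else ⟨v.val + 1, by have := v.isLt; omega⟩)
  else ⟨v.val - 1, by have := v.isLt; omega⟩

lemma gfun_val (v : Fin (n+1)) : (gfun n v).val =
    if v.val = 0 then (if n % 2 = 1 then n else 0)
    else if v.val % 2 = 1 then (if v.val = n then 0 else v.val + 1)
    else v.val - 1 := by
  rw [gfun]
  split_ifs with h1 h2 h3 h4 <;> simp_all

lemma ginv : Function.Involutive (gfun n) := by
  intro v
  apply Fin.ext
  rw [gfun_val, gfun_val]
  have hv := v.isLt
  split_ifs <;> (try contradiction) <;> omega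

def pi0 (n : ℕ) : Equiv.Perm (Fin (n+1)) := Function.Involutive.toPerm _ (ginv (n := n))

lemma pi0_val (v : Fin (n+1)) : (pi0 n v).val =
    if v.val = 0 then (if n % 2 = 1 then n else 0)
    else if v.val % 2 = 1 then (if v.val = n then 0 else v.val + 1)
    else v.val - 1 := gfun_val v

lemma fin_eq_zero_iff {v : Fin (n+1)} : v = 0 ↔ v.val = 0 := by
  rw [Fin.ext_iff, Fin.val_zero]

lemma Aset_pi0 : Aset (pi0 n) = Finset.univ.erase 0 := by
  ext v
  rw [Finset.mem_erase]
  simp only [Aset, Finset.mem_filter, Finset.mem_univ, true_and, and_true]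
  simp only [Ne, Fin.ext_iff, Fin.val_zero, pi0_val]
  have hv := v.isLt
  constructor
  · rintro ⟨h, _⟩; exact h
  · intro h
    refine ⟨h, ?_⟩
    split_ifs <;> omega

lemma Bset_pi0 : Bset (pi0 n) =
    Finset.univ.filter (fun v : Fin (n+1) => v.val % 2 = 1 ∧ v.val ≠ n) := by
  ext v
  simp only [Bset, Finset.mem_filter, Finset.mem_univ, true_and]
  have hinv : (pi0 n) ((pi0 n) v) = v := ginv v
  rw [hinv]
  simp only [eq_self_iff_true, true_and, and_true, Ne, Fin.ext_iff, Fin.val_zero, pi0_val]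
  have hv := v.isLt
  constructor
  · rintro ⟨h0, h1, h2⟩
    constructor <;> (revert h1 h2; split_ifs <;> omega)
  · rintro ⟨h1, h2⟩
    refine ⟨by omega, ?_, ?_⟩ <;> (split_ifs <;> first | omega | exact not_false)

lemma card_odd_range (m : ℕ) :
    ((Finset.range m).filter (fun k => k % 2 = 1)).card = m / 2 := by
  induction m with
  | zero => simp
  | succ m ih =>
    rw [Finset.range_add_one, Finset.filter_insert]
    by_cases h : m % 2 = 1
    · rw [if_pos h, Finset.card_insert_of_notMem (by simp)]
      omega
    · rw [if_neg h]
      omega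

lemma Aset_pi0_card : (Aset (pi0 n)).card = n := by
  rw [Aset_pi0, Finset.card_erase_of_mem (Finset.mem_univ _), Finset.card_univ,
    Fintype.card_fin]
  omega

lemma Bset_pi0_card : (Bset (pi0 n)).card = n / 2 := by
  rw [Bset_pi0, ← card_odd_range n]
  apply Finset.card_nbij' (fun v => v.val) (fun k => ⟨k % (n+1), Nat.mod_lt _ n.succ_pos⟩)
  · intro v hv
    simp only [Finset.mem_coe, Finset.mem_filter, Finset.mem_univ, true_and] at hv
    simp only [Finset.mem_coe, Finset.mem_filter, Finset.mem_range]
    have := v.isLt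
    exact ⟨by omega, hv.1⟩
  · intro k hk
    simp only [Finset.mem_coe, Finset.mem_filter, Finset.mem_range] at hk
    simp only [Finset.mem_coe, Finset.mem_filter, Finset.mem_univ, true_and]
    have hmod : k % (n+1) = k := Nat.mod_eq_of_lt (by omega)
    rw [hmod]
    exact ⟨hk.2, by omega⟩
  · intro v hv
    apply Fin.ext
    simp [Nat.mod_eq_of_lt v.isLt]
  · intro k hk
    simp only [Finset.mem_coe, Finset.mem_filter, Finset.mem_range] at hk
    simp [Nat.mod_eq_of_lt (show k < n+1 by omega)]

lemma psi_pi0 : psi (pi0 n) = 3 * n / 2 := by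
  rw [psi, Aset_pi0_card, Bset_pi0_card]
  omega

lemma psi_one : psi (1 : Equiv.Perm (Fin (n+1))) = 0 := by
  simp [psi, Aset, Bset]

lemma psi_prod_le (R : List (Equiv.Perm (Fin (n+1))))
    (h : ∀ σ ∈ R, IsMatchingStep (starGraph n) σ) : psi R.prod ≤ R.length := by
  induction R with
  | nil => simp [psi_one]
  | cons σ T ih =>
    rw [List.prod_cons]
    have hT := ih (fun τ hτ => h τ (List.mem_cons_of_mem _ hτ))
    rcases step_classify (h σ List.mem_cons_self) with rfl | ⟨i, hi, rfl⟩
    · rw [one_mul, List.length_cons]; omega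
    · have hle := psi_le hi (Equiv.swap 0 i * T.prod)
      rw [Equiv.swap_mul_self_mul] at hle
      rw [List.length_cons]
      omega

lemma Aset_card_le (π : Equiv.Perm (Fin (n+1))) : (Aset π).card ≤ n := by
  have hsub : Aset π ⊆ Finset.univ.erase 0 := by
    intro v hv
    exact Finset.mem_erase.2 ⟨(mem_Aset.1 hv).1, Finset.mem_univ _⟩
  have := Finset.card_le_card hsub
  rw [Finset.card_erase_of_mem (Finset.mem_univ _), Finset.card_univ, Fintype.card_fin] at this
  omega

lemma routable_bound (π : Equiv.Perm (Fin (n+1))) :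
    RoutableIn (starGraph n) π (3 * n / 2) := by
  apply route (Aset π).card π le_rfl
  have hmn := Aset_card_le π
  rw [fval]
  split_ifs with h
  · omega
  · have hmem : π 0 ∈ Aset π :=
      mem_Aset.2 ⟨h, fun hc => h (π.injective hc)⟩
    have h1 : 1 ≤ (Aset π).card := Finset.card_pos.2 ⟨π 0, hmem⟩
    omega

end StarRouting

/-- The routing number of the star `K_{1,n}` is `⌊3 n / 2⌋`. -/
theorem routingNumber_star (n : ℕ) : routingNumber (starGraph n) = 3 * n / 2 := by
  have hub : ∀ π : Equiv.Perm (Fin (n+1)), routingTime (starGraph n) π ≤ 3 * n / 2 :=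
    fun π => Nat.sInf_le (StarRouting.routable_bound π)
  have hbdd : 3 * n / 2 ∈ upperBounds
      (Set.range fun π : Equiv.Perm (Fin (n+1)) => routingTime (starGraph n) π) := by
    rintro x ⟨π, rfl⟩
    exact hub π
  have hlb : 3 * n / 2 ≤ routingTime (starGraph n) (StarRouting.pi0 n) := by
    refine le_csInf ⟨3 * n / 2, ?_⟩ ?_
    · exact StarRouting.routable_bound (StarRouting.pi0 n)
    rintro k ⟨L, hlen, hsteps, hprod⟩
    have hψ := StarRouting.psi_prod_le L.reverse
      (fun σ hσ => hsteps σ (List.mem_reverse.1 hσ))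
    rw [hprod, StarRouting.psi_pi0, List.length_reverse, hlen] at hψ
    exact hψ
  apply le_antisymm
  · exact csSup_le ⟨routingTime (starGraph n) 1, ⟨1, rfl⟩⟩ (fun x hx => hbdd hx)
  · exact le_trans hlb (le_csSup ⟨3 * n / 2, hbdd⟩ ⟨StarRouting.pi0 n, rfl⟩)
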